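/- The q-binomial theorem: for complex a, z, q with |z| < 1 and |q| < 1, sum_{n=0}^{infinity} (a;q)_n z^n / (q;q)_n = (az;q)_infinity / (z;q)_infinity. -/

import Mathlib

/-- `(A;q)_n` -/
noncomputable def qp (q a : ℂ) (n : ℕ) : ℂ :=
  ∏ k ∈ Finset.range n, (1 - a * q ^ k)

/-- `(A;q)_∞` -/
noncomputable def qpinf (q a : ℂ) : ℂ := ∏' k : ℕ, (1 - a * q ^ k)

open Filter Finset Complex Topology

namespace QBinAux

lemma summable_wk {q : ℂ} (hq : ‖q‖ < 1) (w : ℂ) :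
    Summable (fun k : ℕ => ‖w‖ * ‖q‖ ^ k) :=
  (summable_geometric_of_lt_one (norm_nonneg q) hq).mul_left _

lemma factors_ne {q : ℂ} (hq : ‖q‖ < 1) {w : ℂ} (hw : ‖w‖ < 1) (k : ℕ) :
    (1 : ℂ) - w * q ^ k ≠ 0 := by
  intro h
  have h1 : w * q ^ k = 1 := by linear_combination -h
  have h2 : ‖w * q ^ k‖ < 1 := by
    rw [norm_mul, norm_pow]
    calc ‖w‖ * ‖q‖ ^ k ≤ ‖w‖ * 1 := by
          exact mul_le_mul_of_nonneg_left (pow_le_one₀ (norm_nonneg q) hq.le) (norm_nonneg w)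
      _ = ‖w‖ := mul_one _
      _ < 1 := hw
  rw [h1, norm_one] at h2
  exact lt_irrefl _ h2

lemma summable_log {q : ℂ} (hq : ‖q‖ < 1) (w : ℂ)
    (h : ∀ k : ℕ, (1 : ℂ) - w * q ^ k ≠ 0) :
    Summable (fun k : ℕ => Complex.log (1 - w * q ^ k)) := by
  apply Summable.of_norm_bounded_eventually_nat (g := fun k => 3 / 2 * (‖w‖ * ‖q‖ ^ k))
    ((summable_wk hq w).mul_left _)
  have h0 : Tendsto (fun k : ℕ => ‖w‖ * ‖q‖ ^ k) atTop (𝓝 (‖w‖ * 0)) :=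
    (tendsto_pow_atTop_nhds_zero_of_lt_one (norm_nonneg q) hq).const_mul _
  rw [mul_zero] at h0
  filter_upwards [h0.eventually_lt_const (by norm_num : (0:ℝ) < 1/2)] with k hk
  have hsmall : ‖-(w * q ^ k)‖ ≤ 1 / 2 := by
    rw [norm_neg, norm_mul, norm_pow]; linarith
  have : (1 : ℂ) - w * q ^ k = 1 + -(w * q ^ k) := by ring
  rw [this]
  calc ‖Complex.log (1 + -(w * q ^ k))‖ ≤ 3 / 2 * ‖-(w * q ^ k)‖ :=
        Complex.norm_log_one_add_half_le_self hsmall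
    _ = 3 / 2 * (‖w‖ * ‖q‖ ^ k) := by rw [norm_neg, norm_mul, norm_pow]

lemma qpinf_ne_zero {q : ℂ} (hq : ‖q‖ < 1) (w : ℂ)
    (h : ∀ k : ℕ, (1 : ℂ) - w * q ^ k ≠ 0) : qpinf q w ≠ 0 := by
  have h2 : cexp (∑' k : ℕ, Complex.log (1 - w * q ^ k)) = ∏' k : ℕ, (1 - w * q ^ k) :=
    Complex.cexp_tsum_eq_tprod (f := fun k : ℕ => 1 - w * q ^ k) h (summable_log hq w h)
  rw [qpinf, ← h2]
  exact Complex.exp_ne_zero _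

lemma hasProd_qpinf {q : ℂ} (hq : ‖q‖ < 1) (w : ℂ)
    (h : ∀ k : ℕ, (1 : ℂ) - w * q ^ k ≠ 0) :
    HasProd (fun k : ℕ => 1 - w * q ^ k) (qpinf q w) :=
  (Complex.multipliable_of_summable_log (f := fun k : ℕ => 1 - w * q ^ k)
    (summable_log hq w h)).hasProd

lemma tendsto_qp {q : ℂ} (hq : ‖q‖ < 1) (w : ℂ) :
    Tendsto (fun n => qp q w n) atTop (𝓝 (qpinf q w)) := by
  have : ∀ hp : HasProd (fun k : ℕ => 1 - w * q ^ k) (qpinf q w),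
      Tendsto (fun n => qp q w n) atTop (𝓝 (qpinf q w)) := by
    intro hp
    simpa [qp] using hp.tendsto_prod_nat
  by_cases h : ∀ k : ℕ, (1 : ℂ) - w * q ^ k ≠ 0
  · exact this (hasProd_qpinf hq w h)
  · push_neg at h
    obtain ⟨k0, hk0⟩ := h
    have hzero : HasProd (fun k : ℕ => 1 - w * q ^ k) 0 := by
      have hev : ∀ᶠ s : Finset ℕ in atTop, ∏ i ∈ s, ((1:ℂ) - w * q ^ i) = 0 := by
        filter_upwards [eventually_ge_atTop ({k0} : Finset ℕ)] with s hs
        exact Finset.prod_eq_zero (hs (Finset.mem_singleton_self k0)) hk0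
      exact Tendsto.congr' (hev.mono fun s hs => hs.symm) tendsto_const_nhds
    have h0 : qpinf q w = 0 := hzero.tprod_eq
    rw [h0] at this ⊢
    exact this hzero

lemma qp_norm_le {q : ℂ} (hq : ‖q‖ < 1) (w : ℂ) (n : ℕ) :
    ‖qp q w n‖ ≤ Real.exp (‖w‖ * (1 - ‖q‖)⁻¹) := by
  rw [qp]
  calc ‖∏ k ∈ Finset.range n, ((1:ℂ) - w * q ^ k)‖
      ≤ ∏ k ∈ Finset.range n, ‖(1:ℂ) - w * q ^ k‖ := norm_prod_le _ _
    _ ≤ ∏ k ∈ Finset.range n, Real.exp (‖w‖ * ‖q‖ ^ k) := by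
        apply Finset.prod_le_prod (fun k _ => norm_nonneg _)
        intro k _
        calc ‖(1:ℂ) - w * q ^ k‖ ≤ ‖(1:ℂ)‖ + ‖w * q ^ k‖ := norm_sub_le _ _
          _ = ‖w‖ * ‖q‖ ^ k + 1 := by rw [norm_one, norm_mul, norm_pow]; ring
          _ ≤ Real.exp (‖w‖ * ‖q‖ ^ k) := Real.add_one_le_exp _
    _ = Real.exp (∑ k ∈ Finset.range n, ‖w‖ * ‖q‖ ^ k) := (Real.exp_sum _ _).symm
    _ ≤ Real.exp (‖w‖ * (1 - ‖q‖)⁻¹) := by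
        apply Real.exp_le_exp.2
        have hsum := Summable.sum_le_tsum (Finset.range n) (fun k _ => by positivity)
          (summable_wk hq w)
        rwa [tsum_mul_left, tsum_geometric_of_lt_one (norm_nonneg q) hq] at hsum

/-- the coefficients -/
noncomputable def qc (q a : ℂ) (n : ℕ) : ℂ := qp q a n / qp q q n

/-- the series -/
noncomputable def S (q a w : ℂ) : ℂ := ∑' n : ℕ, qc q a n * w ^ n

lemma qp_q_ne_zero {q : ℂ} (hq : ‖q‖ < 1) (n : ℕ) : qp q q n ≠ 0 := by
  rw [qp]
  exact Finset.prod_ne_zero_iff.2 fun k _ => factors_ne hq hq k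

lemma cbound {q : ℂ} (hq : ‖q‖ < 1) (a : ℂ) :
    ∃ C : ℝ, 0 ≤ C ∧ ∀ n, ‖qc q a n‖ ≤ C := by
  have hne : qpinf q q ≠ 0 := qpinf_ne_zero hq q (factors_ne hq hq)
  have ht : Tendsto (fun n => ‖(qp q q n)⁻¹‖) atTop (𝓝 ‖(qpinf q q)⁻¹‖) :=
    ((tendsto_qp hq q).inv₀ hne).norm
  obtain ⟨C₂, hC₂⟩ := ht.bddAbove_range
  have hC₂0 : 0 ≤ C₂ := le_trans (norm_nonneg _) (hC₂ (Set.mem_range_self 0))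
  refine ⟨Real.exp (‖a‖ * (1 - ‖q‖)⁻¹) * C₂, by positivity, fun n => ?_⟩
  rw [qc, div_eq_mul_inv, norm_mul]
  exact mul_le_mul (qp_norm_le hq a n) (hC₂ (Set.mem_range_self n)) (norm_nonneg _)
    (Real.exp_pos _).le

lemma hsummable {q a : ℂ} {C : ℝ} (hC : ∀ n, ‖qc q a n‖ ≤ C) {w : ℂ} (hw : ‖w‖ < 1) :
    Summable (fun n : ℕ => qc q a n * w ^ n) := by
  apply Summable.of_norm_bounded (g := fun n => C * ‖w‖ ^ n)
    ((summable_geometric_of_lt_one (norm_nonneg w) hw).mul_left C)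
  intro n
  rw [norm_mul, norm_pow]
  exact mul_le_mul_of_nonneg_right (hC n) (by positivity)

lemma qc_rec {q : ℂ} (hq : ‖q‖ < 1) (a : ℂ) (n : ℕ) :
    qc q a (n + 1) * (1 - q ^ (n + 1)) = qc q a n * (1 - a * q ^ n) := by
  have h1 : qp q q n ≠ 0 := qp_q_ne_zero hq n
  have h2 : (1 : ℂ) - q * q ^ n ≠ 0 := factors_ne hq hq n
  have e1 : qp q a (n + 1) = qp q a n * (1 - a * q ^ n) := by
    rw [qp, qp, Finset.prod_range_succ]
  have e2 : qp q q (n + 1) = qp q q n * (1 - q * q ^ n) := by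
    rw [qp, qp, Finset.prod_range_succ]
  have e3 : (1 : ℂ) - q ^ (n + 1) = 1 - q * q ^ n := by rw [pow_succ']
  rw [qc, qc, e1, e2, e3]
  rw [div_mul_eq_mul_div, div_mul_eq_mul_div, div_eq_div_iff (mul_ne_zero h1 h2) h1]
  ring

lemma func_eq {q : ℂ} (hq : ‖q‖ < 1) (a : ℂ) {C : ℝ} (hC : ∀ n, ‖qc q a n‖ ≤ C)
    {w : ℂ} (hw : ‖w‖ < 1) :
    (1 - w) * S q a w = (1 - a * w) * S q a (q * w) := by
  have hqw : ‖q * w‖ < 1 := by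
    rw [norm_mul]
    calc ‖q‖ * ‖w‖ ≤ 1 * ‖w‖ :=
          mul_le_mul_of_nonneg_right hq.le (norm_nonneg w)
      _ = ‖w‖ := one_mul _
      _ < 1 := hw
  set f : ℕ → ℂ := fun n => qc q a n * w ^ n with hf_def
  set f' : ℕ → ℂ := fun n => qc q a n * (q * w) ^ n with hf'_def
  set g : ℕ → ℂ := fun n => qc q a n * (1 - q ^ n) * w ^ n with hg_def
  set h : ℕ → ℂ := fun n => qc q a n * (1 - a * q ^ n) * w ^ (n + 1) with hh_def
  have hf : Summable f := hsummable hC hw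
  have hf' : Summable f' := hsummable hC hqw
  have hg : Summable g := by
    apply (hf.sub hf').congr
    intro n
    simp only [hf_def, hf'_def, hg_def, mul_pow]
    ring
  have hh : Summable h := by
    apply ((hf.mul_left w).sub (hf'.mul_left (a * w))).congr
    intro n
    simp only [hf_def, hf'_def, hh_def, mul_pow, pow_succ]
    ring
  have key : ∑' n, g n = ∑' n, h n := by
    rw [Summable.tsum_eq_zero_add hg]
    have h0 : g 0 = 0 := by simp [hg_def]
    rw [h0, zero_add]
    apply tsum_congr
    intro n
    have := qc_rec hq a n
    simp only [hg_def, hh_def]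
    calc qc q a (n + 1) * (1 - q ^ (n + 1)) * w ^ (n + 1)
        = (qc q a (n + 1) * (1 - q ^ (n + 1))) * w ^ (n + 1) := by ring
      _ = (qc q a n * (1 - a * q ^ n)) * w ^ (n + 1) := by rw [this]
      _ = qc q a n * (1 - a * q ^ n) * w ^ (n + 1) := by ring
  have e1 : (1 - w) * S q a w = ∑' n, (1 - w) * f n := tsum_mul_left.symm
  have e2 : (1 - a * w) * S q a (q * w) = ∑' n, (1 - a * w) * f' n := tsum_mul_left.symm
  rw [e1, e2]
  have hpt : ∀ n, (1 - w) * f n = (g n - h n) + (1 - a * w) * f' n := by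
    intro n
    simp only [hf_def, hf'_def, hg_def, hh_def, mul_pow, pow_succ]
    ring
  calc ∑' n, (1 - w) * f n = ∑' n, ((g n - h n) + (1 - a * w) * f' n) := tsum_congr hpt
    _ = (∑' n, (g n - h n)) + ∑' n, (1 - a * w) * f' n :=
        Summable.tsum_add (hg.sub hh) (hf'.mul_left _)
    _ = ((∑' n, g n) - ∑' n, h n) + ∑' n, (1 - a * w) * f' n := by rw [Summable.tsum_sub hg hh]
    _ = ∑' n, (1 - a * w) * f' n := by rw [key, sub_self, zero_add]

lemma iterate {q : ℂ} (hq : ‖q‖ < 1) (a : ℂ) {C : ℝ} (hC : ∀ n, ‖qc q a n‖ ≤ C)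
    {z : ℂ} (hz : ‖z‖ < 1) (N : ℕ) :
    S q a z * qp q z N = S q a (q ^ N * z) * qp q (a * z) N := by
  induction N with
  | zero => simp [qp]
  | succ N ih =>
    have hwle : ‖q ^ N * z‖ < 1 := by
      rw [norm_mul, norm_pow]
      calc ‖q‖ ^ N * ‖z‖ ≤ 1 * ‖z‖ :=
            mul_le_mul_of_nonneg_right (pow_le_one₀ (norm_nonneg q) hq.le) (norm_nonneg z)
        _ = ‖z‖ := one_mul _
        _ < 1 := hz
    have hfe := func_eq hq a hC hwle
    have e1 : qp q z (N + 1) = qp q z N * (1 - z * q ^ N) := by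
      rw [qp, qp, Finset.prod_range_succ]
    have e2 : qp q (a * z) (N + 1) = qp q (a * z) N * (1 - a * z * q ^ N) := by
      rw [qp, qp, Finset.prod_range_succ]
    have harg : q * (q ^ N * z) = q ^ (N + 1) * z := by ring
    rw [e1, e2]
    calc S q a z * (qp q z N * (1 - z * q ^ N))
        = (S q a z * qp q z N) * (1 - z * q ^ N) := by ring
      _ = (S q a (q ^ N * z) * qp q (a * z) N) * (1 - z * q ^ N) := by rw [ih]
      _ = ((1 - q ^ N * z) * S q a (q ^ N * z)) * qp q (a * z) N := by ring
      _ = ((1 - a * (q ^ N * z)) * S q a (q * (q ^ N * z))) * qp q (a * z) N := by rw [hfe]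
      _ = ((1 - a * (q ^ N * z)) * S q a (q ^ (N + 1) * z)) * qp q (a * z) N := by rw [harg]
      _ = S q a (q ^ (N + 1) * z) * (qp q (a * z) N * (1 - a * z * q ^ N)) := by ring

lemma S_sub_one {q a : ℂ} {C : ℝ} (hC0 : 0 ≤ C) (hC : ∀ n, ‖qc q a n‖ ≤ C)
    {z w : ℂ} (hz : ‖z‖ < 1) (hwz : ‖w‖ ≤ ‖z‖) :
    ‖S q a w - 1‖ ≤ C * (1 - ‖z‖)⁻¹ * ‖w‖ := by
  have hw : ‖w‖ < 1 := lt_of_le_of_lt hwz hz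
  have hf : Summable (fun n : ℕ => qc q a n * w ^ n) := hsummable hC hw
  have hq0 : qc q a 0 * w ^ 0 = 1 := by simp [qc, qp]
  have h0 : S q a w = 1 + ∑' n : ℕ, qc q a (n + 1) * w ^ (n + 1) := by
    rw [S, Summable.tsum_eq_zero_add hf, hq0]
  rw [h0, add_sub_cancel_left]
  have hb : ∀ n : ℕ, ‖qc q a (n + 1) * w ^ (n + 1)‖ ≤ C * ‖w‖ * ‖z‖ ^ n := by
    intro n
    rw [norm_mul, norm_pow, pow_succ']
    calc ‖qc q a (n + 1)‖ * (‖w‖ * ‖w‖ ^ n)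
        ≤ C * (‖w‖ * ‖z‖ ^ n) := by
          apply mul_le_mul (hC _) ?_ (by positivity) hC0
          exact mul_le_mul_of_nonneg_left
            (pow_le_pow_left₀ (norm_nonneg w) hwz n) (norm_nonneg w)
      _ = C * ‖w‖ * ‖z‖ ^ n := by ring
  have hs : Summable (fun n : ℕ => C * ‖w‖ * ‖z‖ ^ n) :=
    (summable_geometric_of_lt_one (norm_nonneg z) hz).mul_left _
  have hns : Summable (fun n : ℕ => ‖qc q a (n + 1) * w ^ (n + 1)‖) :=
    Summable.of_nonneg_of_le (fun n => norm_nonneg _) hb hs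
  calc ‖∑' n : ℕ, qc q a (n + 1) * w ^ (n + 1)‖
      ≤ ∑' n : ℕ, ‖qc q a (n + 1) * w ^ (n + 1)‖ := norm_tsum_le_tsum_norm hns
    _ ≤ ∑' n : ℕ, C * ‖w‖ * ‖z‖ ^ n := Summable.tsum_le_tsum hb hns hs
    _ = C * ‖w‖ * (1 - ‖z‖)⁻¹ := by
        rw [tsum_mul_left, tsum_geometric_of_lt_one (norm_nonneg z) hz]
    _ = C * (1 - ‖z‖)⁻¹ * ‖w‖ := by ring

lemma tendsto_S {q : ℂ} (hq : ‖q‖ < 1) (a : ℂ) {C : ℝ} (hC0 : 0 ≤ C)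
    (hC : ∀ n, ‖qc q a n‖ ≤ C) {z : ℂ} (hz : ‖z‖ < 1) :
    Tendsto (fun N : ℕ => S q a (q ^ N * z)) atTop (𝓝 1) := by
  rw [tendsto_iff_norm_sub_tendsto_zero]
  apply squeeze_zero (g := fun N : ℕ => C * (1 - ‖z‖)⁻¹ * ‖z‖ * ‖q‖ ^ N)
    (fun N => norm_nonneg _)
  · intro N
    have hwz : ‖q ^ N * z‖ ≤ ‖z‖ := by
      rw [norm_mul, norm_pow]
      calc ‖q‖ ^ N * ‖z‖ ≤ 1 * ‖z‖ :=
            mul_le_mul_of_nonneg_right (pow_le_one₀ (norm_nonneg q) hq.le) (norm_nonneg z)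
        _ = ‖z‖ := one_mul _
    calc ‖S q a (q ^ N * z) - 1‖ ≤ C * (1 - ‖z‖)⁻¹ * ‖q ^ N * z‖ :=
          S_sub_one hC0 hC hz hwz
      _ = C * (1 - ‖z‖)⁻¹ * ‖z‖ * ‖q‖ ^ N := by rw [norm_mul, norm_pow]; ring
  · have := (tendsto_pow_atTop_nhds_zero_of_lt_one (norm_nonneg q) hq).const_mul
      (C * (1 - ‖z‖)⁻¹ * ‖z‖)
    simpa using this

end QBinAux

open QBinAux in
theorem q_binomial_theorem (a z q : ℂ) (hz : ‖z‖ < 1) (hq : ‖q‖ < 1) :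
    ∑' n : ℕ, qp q a n * z ^ n / qp q q n = qpinf q (a * z) / qpinf q z := by
  obtain ⟨C, hC0, hC⟩ := cbound hq a
  have h1 : Tendsto (fun N : ℕ => S q a z * qp q z N) atTop (𝓝 (S q a z * qpinf q z)) :=
    (tendsto_qp hq z).const_mul _
  have h2 : Tendsto (fun N : ℕ => S q a (q ^ N * z) * qp q (a * z) N) atTop
      (𝓝 (1 * qpinf q (a * z))) :=
    (tendsto_S hq a hC0 hC hz).mul (tendsto_qp hq (a * z))
  have h3 : S q a z * qpinf q z = 1 * qpinf q (a * z) :=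
    tendsto_nhds_unique (h1.congr (fun N => iterate hq a hC hz N)) h2
  have hne : qpinf q z ≠ 0 := qpinf_ne_zero hq z (factors_ne hq hz)
  have hS : S q a z = qpinf q (a * z) / qpinf q z := by
    rw [eq_div_iff hne]
    linear_combination h3
  rw [← hS, S]
  apply tsum_congr
  intro n
  rw [qc, mul_div_right_comm]
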